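/- For every integer d ≥ 1 and every integer N ≥ 1, there exists a recoloring algorithm A on the vertex set V = {1,…,N} such that for every update sequence G₀, G₁, …, G_m: (i) every coloring produced by A takes values in {1, …, (1 + d·(⌈N^{1/d}⌉ − 1))·C}, where C = max_{0 ≤ t ≤ m} χ(G_t); and (ii) the total number of recolorings performed over the m updates is at most (d + 2)·m. In particular, the algorithm is O(d·N^{1/d})-competitive and performs O(d) amortized vertex recolorings per update. -/

import Mathlib

/-- `H` is obtained from `G` by inserting or deleting exactly one edge. -/
def isStep {V : Type*} (G H : SimpleGraph V) : Prop :=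
  ∃ u v : V, u ≠ v ∧
    ((¬ G.Adj u v ∧ H = G ⊔ SimpleGraph.fromEdgeSet {s(u, v)}) ∨
     (G.Adj u v ∧ H = G \ SimpleGraph.fromEdgeSet {s(u, v)}))

/-- `f` is a proper (ℕ-valued) coloring of `G`. -/
def IsProperNat {V : Type*} (G : SimpleGraph V) (f : V → ℕ) : Prop :=
  ∀ ⦃u v⦄, G.Adj u v → f u ≠ f v

/-- Number of vertices on which the colorings `f` and `g` differ. -/
def recount {N : ℕ} (f g : Fin N → ℕ) : ℕ :=
  (Finset.univ.filter fun v => f v ≠ g v).card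

namespace SBaux

open Finset

/-! ### Generic bucket encodings -/

/-- The level of a bucket: `d` for the top bucket, `j` for a low bucket `(j, c)`. -/
def lvl {d k : ℕ} (b : Option (Fin d × Fin k)) : ℕ := b.elim d (fun p => (p.1 : ℕ))

lemma lvl_le {d k : ℕ} (b : Option (Fin d × Fin k)) : lvl b ≤ d := by
  cases b with
  | none => exact le_rfl
  | some p => exact (p.1.isLt).le

lemma lvl_none {d k : ℕ} : lvl (none : Option (Fin d × Fin k)) = d := rfl

lemma lvl_some {d k : ℕ} (p : Fin d × Fin k) : lvl (some p) = (p.1 : ℕ) := rfl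

/-- Encoding of buckets into `{0, …, d*k}`. -/
def encB {d k : ℕ} (b : Option (Fin d × Fin k)) : ℕ :=
  b.elim 0 (fun p => 1 + (p.1 : ℕ) * k + (p.2 : ℕ))

lemma encB_lt {d k : ℕ} (b : Option (Fin d × Fin k)) : encB b < 1 + d * k := by
  cases b with
  | none => simp [encB]
  | some p =>
    have h1 : (p.1 : ℕ) < d := p.1.isLt
    have h2 : (p.2 : ℕ) < k := p.2.isLt
    have : (p.1 : ℕ) * k + (p.2 : ℕ) < d * k := by
      calc (p.1 : ℕ) * k + (p.2 : ℕ) < (p.1 : ℕ) * k + k := by omega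
        _ = ((p.1 : ℕ) + 1) * k := by ring
        _ ≤ d * k := Nat.mul_le_mul_right _ (by omega)
    simp only [encB, Option.elim]
    omega

lemma base_inj {k a b a' b' : ℕ} (hb : b < k) (hb' : b' < k)
    (h : a * k + b = a' * k + b') : a = a' ∧ b = b' := by
  have hk : 0 < k := by omega
  have e1 : (a * k + b) / k = a := by
    rw [mul_comm, Nat.mul_add_div hk, Nat.div_eq_of_lt hb, add_zero]
  have e2 : (a' * k + b') / k = a' := by
    rw [mul_comm, Nat.mul_add_div hk, Nat.div_eq_of_lt hb', add_zero]
  have e3 : (a * k + b) % k = b := by rw [Nat.mul_add_mod', Nat.mod_eq_of_lt hb]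
  have e4 : (a' * k + b') % k = b' := by rw [Nat.mul_add_mod', Nat.mod_eq_of_lt hb']
  constructor
  · rw [← e1, ← e2, h]
  · rw [← e3, ← e4, h]

lemma encB_inj {d k : ℕ} {b b' : Option (Fin d × Fin k)} (h : encB b = encB b') : b = b' := by
  cases b with
  | none =>
    cases b' with
    | none => rfl
    | some p => simp only [encB, Option.elim] at h; omega
  | some p =>
    cases b' with
    | none => simp only [encB, Option.elim] at h; omega
    | some p' =>
      simp only [encB, Option.elim] at h
      have h' : (p.1 : ℕ) * k + (p.2 : ℕ) = (p'.1 : ℕ) * k + (p'.2 : ℕ) := by omega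
      obtain ⟨h1, h2⟩ := base_inj p.2.isLt p'.2.isLt h'
      have : p = p' := by
        ext
        · exact h1
        · exact h2
      rw [this]

/-! ### Parameters -/

variable (d N : ℕ)

/-- `s = ⌈N^(1/d)⌉`. -/
noncomputable def sN : ℕ := ⌈(N : ℝ) ^ ((1 : ℝ) / d)⌉₊

/-- The number of buckets. -/
noncomputable def Bk : ℕ := 1 + d * (sN d N - 1)

lemma one_le_sN (hN : 1 ≤ N) : 1 ≤ sN d N := by
  have : (0 : ℝ) < (N : ℝ) ^ ((1 : ℝ) / d) :=
    Real.rpow_pos_of_pos (by exact_mod_cast hN) _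
  exact Nat.ceil_pos.mpr this

lemma N_le_sN_pow (hd : 1 ≤ d) (hN : 1 ≤ N) : N ≤ (sN d N) ^ d := by
  have hd0 : (d : ℝ) ≠ 0 := by positivity
  have h0 : (0 : ℝ) ≤ (N : ℝ) := by positivity
  have h1 : ((N : ℝ) ^ ((1 : ℝ) / d)) ^ (d : ℕ) = (N : ℝ) := by
    rw [← Real.rpow_natCast ((N : ℝ) ^ ((1 : ℝ) / d)) d, ← Real.rpow_mul h0]
    rw [one_div, inv_mul_cancel₀ hd0, Real.rpow_one]
  have h2 : (N : ℝ) ^ ((1 : ℝ) / d) ≤ (sN d N : ℝ) := Nat.le_ceil _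
  have h3 : (N : ℝ) ≤ ((sN d N : ℝ)) ^ (d : ℕ) := by
    rw [← h1]
    exact pow_le_pow_left₀ (Real.rpow_nonneg h0 _) h2 d
  exact_mod_cast h3

/-! ### The algorithm state -/

/-- State of the small-buckets algorithm: a bucket and a local color for each vertex. -/
structure St where
  bk : Fin N → Option (Fin d × Fin (sN d N - 1))
  loc : Fin N → ℕ

/-- The actual coloring computed from a state. -/
noncomputable def colorOf (σ : St d N) : Fin N → ℕ :=
  fun v => 1 + encB (σ.bk v) + Bk d N * σ.loc v

lemma colorOf_inj (σ : St d N) {x y : Fin N} (h : colorOf d N σ x = colorOf d N σ y) :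
    σ.bk x = σ.bk y ∧ σ.loc x = σ.loc y := by
  have hx := encB_lt (σ.bk x)
  have hy := encB_lt (σ.bk y)
  have e1 := Nat.mul_comm (Bk d N) (σ.loc x)
  have e2 := Nat.mul_comm (Bk d N) (σ.loc y)
  have h' : σ.loc x * Bk d N + encB (σ.bk x) = σ.loc y * Bk d N + encB (σ.bk y) := by
    simp only [colorOf] at h
    omega
  obtain ⟨h1, h2⟩ := base_inj (k := Bk d N) hx hy h'
  exact ⟨encB_inj h2, h1⟩

/-- Initial state: everything in the top bucket with local color `0`. -/
noncomputable def init : St d N := ⟨fun _ => none, fun _ => 0⟩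

/-- A chosen optimal proper coloring of a graph on `Fin N`. -/
noncomputable def optC {N : ℕ} (G : SimpleGraph (Fin N)) : Fin N → ℕ :=
  fun v => ((G.colorable_chromaticNumber_of_fintype).some v : ℕ)

lemma optC_lt {N : ℕ} (G : SimpleGraph (Fin N)) (v : Fin N) :
    optC G v < G.chromaticNumber.toNat :=
  ((G.colorable_chromaticNumber_of_fintype).some v).isLt

lemma optC_proper {N : ℕ} (G : SimpleGraph (Fin N)) {x y : Fin N} (h : G.Adj x y) :
    optC G x ≠ optC G y := by
  intro he
  exact ((G.colorable_chromaticNumber_of_fintype).some.valid h) (Fin.val_injective he)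

/-- Reset into an empty low bucket `(i, c0)`. -/
noncomputable def resetLow (σ : St d N) (Gn : SimpleGraph (Fin N)) (u : Fin N)
    (i : Fin d) (c0 : Fin (sN d N - 1)) : St d N :=
  ⟨fun v => if v = u ∨ lvl (σ.bk v) < (i : ℕ) then some (i, c0) else σ.bk v,
   fun v => if v = u ∨ lvl (σ.bk v) < (i : ℕ) then optC Gn v else σ.loc v⟩

/-- Reset everything into the top bucket. -/
noncomputable def resetTop (Gn : SimpleGraph (Fin N)) : St d N :=
  ⟨fun _ => none, fun v => optC Gn v⟩

open Classical in
/-- One step of the small-buckets algorithm. -/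
noncomputable def step (σ : St d N) (Gn : SimpleGraph (Fin N)) : St d N :=
  if H : ∃ v w, Gn.Adj v w ∧ colorOf d N σ v = colorOf d N σ w then
    if hE : (Finset.univ.filter fun j : Fin d =>
        ∃ c, ∀ x, σ.bk x ≠ some (j, c)).Nonempty then
      resetLow d N σ Gn H.choose (Finset.min' _ hE)
        (Finset.mem_filter.mp (Finset.min'_mem _ hE)).2.choose
    else resetTop d N Gn
  else σ

lemma step_no_conflict (σ : St d N) (Gn : SimpleGraph (Fin N))
    (h : ¬ ∃ v w, Gn.Adj v w ∧ colorOf d N σ v = colorOf d N σ w) :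
    step d N σ Gn = σ := by
  rw [step, dif_neg h]

lemma step_cases (σ : St d N) (Gn : SimpleGraph (Fin N)) :
    ((¬ ∃ v w, Gn.Adj v w ∧ colorOf d N σ v = colorOf d N σ w) ∧ step d N σ Gn = σ)
  ∨ (∃ (u : Fin N) (i : Fin d) (c0 : Fin (sN d N - 1)),
      (∃ w, Gn.Adj u w ∧ colorOf d N σ u = colorOf d N σ w) ∧
      (∀ x, σ.bk x ≠ some (i, c0)) ∧
      (∀ j : Fin d, (j : ℕ) < (i : ℕ) → ∀ c, ∃ x, σ.bk x = some (j, c)) ∧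
      step d N σ Gn = resetLow d N σ Gn u i c0)
  ∨ ((∃ v w, Gn.Adj v w ∧ colorOf d N σ v = colorOf d N σ w) ∧
      (∀ (j : Fin d) (c : Fin (sN d N - 1)), ∃ x, σ.bk x = some (j, c)) ∧
      step d N σ Gn = resetTop d N Gn) := by
  classical
  rw [step]
  split_ifs with H hE
  · right; left
    refine ⟨H.choose, Finset.min' _ hE,
      (Finset.mem_filter.mp (Finset.min'_mem _ hE)).2.choose, ?_, ?_, ?_, rfl⟩
    · obtain ⟨w, hw⟩ := H.choose_spec
      exact ⟨w, hw⟩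
    · exact (Finset.mem_filter.mp (Finset.min'_mem _ hE)).2.choose_spec
    · intro j hj c
      by_contra hcon
      push_neg at hcon
      have hjE : j ∈ Finset.univ.filter fun j : Fin d =>
          ∃ c, ∀ x, σ.bk x ≠ some (j, c) := by
        refine Finset.mem_filter.mpr ⟨Finset.mem_univ _, ⟨c, ?_⟩⟩
        intro x hx
        exact hcon x hx
      have := Finset.min'_le _ _ hjE
      rw [Fin.le_def] at this
      omega
  · right; right
    refine ⟨H, ?_, rfl⟩
    intro j c
    by_contra hcon
    push_neg at hcon
    exact hE ⟨j, Finset.mem_filter.mpr ⟨Finset.mem_univ _, ⟨c, fun x hx => hcon x hx⟩⟩⟩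
  · left; exact ⟨H, rfl⟩

/-! ### Properness -/

lemma conflict_endpoint {Go Gn : SimpleGraph (Fin N)} {f : Fin N → ℕ}
    (hst : isStep Go Gn) (hp : IsProperNat Go f)
    {x y x' y' : Fin N} (h1 : Gn.Adj x y) (h2 : f x = f y)
    (h1' : Gn.Adj x' y') (h2' : f x' = f y') : x' = x ∨ x' = y := by
  obtain ⟨a, b, hab, hcase⟩ := hst
  rcases hcase with ⟨-, rfl⟩ | ⟨-, rfl⟩
  · -- insertion
    have key : ∀ {p q : Fin N}, ((Go ⊔ SimpleGraph.fromEdgeSet {s(a, b)}).Adj p q) →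
        f p = f q → (p = a ∧ q = b) ∨ (p = b ∧ q = a) := by
      intro p q hpq hfpq
      rcases (SimpleGraph.sup_adj _ _ _ _).mp hpq with h | h
      · exact absurd hfpq (hp h)
      · rw [SimpleGraph.fromEdgeSet_adj] at h
        have := h.1
        simp only [Set.mem_singleton_iff, Sym2.eq_iff] at this
        tauto
    rcases key h1 h2 with ⟨rfl, rfl⟩ | ⟨rfl, rfl⟩ <;>
      rcases key h1' h2' with ⟨rfl, rfl⟩ | ⟨rfl, rfl⟩ <;> tauto
  · -- deletion
    have : Go.Adj x y := ((SimpleGraph.sdiff_adj _ _ _ _).mp h1).1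
    exact absurd h2 (hp this)

lemma step_proper {Go Gn : SimpleGraph (Fin N)} {σ : St d N}
    (hst : isStep Go Gn) (hp : IsProperNat Go (colorOf d N σ)) :
    IsProperNat Gn (colorOf d N (step d N σ Gn)) := by
  rcases step_cases d N σ Gn with ⟨H, heq⟩ | ⟨u, i, c0, hu, hEmpty, _, heq⟩ | ⟨_, _, heq⟩
  · rw [heq]
    intro x y hxy hf
    exact H ⟨x, y, hxy, hf⟩
  · rw [heq]
    intro x y hxy hf
    obtain ⟨hbk, hloc⟩ := colorOf_inj d N _ hf
    simp only [resetLow] at hbk hloc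
    by_cases hx : x = u ∨ lvl (σ.bk x) < (i : ℕ) <;>
      by_cases hy : y = u ∨ lvl (σ.bk y) < (i : ℕ)
    · rw [if_pos hx, if_pos hy] at hloc
      exact optC_proper Gn hxy hloc
    · rw [if_pos hx, if_neg hy] at hbk
      exact hEmpty y hbk.symm
    · rw [if_neg hx, if_pos hy] at hbk
      exact hEmpty x hbk
    · rw [if_neg hx, if_neg hy] at hbk hloc
      have hfold : colorOf d N σ x = colorOf d N σ y := by
        simp only [colorOf, hbk, hloc]
      obtain ⟨w, hw1, hw2⟩ := hu
      have := conflict_endpoint N hst hp hxy hfold hw1 hw2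
      rcases this with rfl | rfl
      · exact hx (Or.inl rfl)
      · exact hy (Or.inl rfl)
  · rw [heq]
    intro x y hxy hf
    obtain ⟨-, hloc⟩ := colorOf_inj d N _ hf
    simp only [resetTop] at hloc
    exact optC_proper Gn hxy hloc

lemma step_loc (σ : St d N) (Gn : SimpleGraph (Fin N)) (v : Fin N) :
    (step d N σ Gn).loc v = σ.loc v ∨ (step d N σ Gn).loc v = optC Gn v := by
  rcases step_cases d N σ Gn with ⟨_, heq⟩ | ⟨u, i, c0, _, _, _, heq⟩ | ⟨_, _, heq⟩
  · rw [heq]; left; rfl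
  · rw [heq]
    simp only [resetLow]
    split_ifs
    · right; rfl
    · left; rfl
  · rw [heq]; right; rfl

/-! ### The potential function -/

noncomputable def Tsum (σ : St d N) : ℤ := ∑ v : Fin N, (lvl (σ.bk v) : ℤ)

noncomputable def Mlow (σ : St d N) : ℤ :=
  ((Finset.univ.filter fun v : Fin N => lvl (σ.bk v) < d).card : ℤ)

noncomputable def Wsum (σ : St d N) : ℤ :=
  ∑ p : Fin d × Fin (sN d N - 1),
    if ∃ v, σ.bk v = some p then ((sN d N : ℤ)) ^ ((p.1 : ℕ)) else 0

noncomputable def Φ (σ : St d N) : ℤ :=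
  (N : ℤ) * d + Wsum d N σ - Tsum d N σ - Mlow d N σ

lemma tm_le (σ : St d N) : Tsum d N σ + Mlow d N σ ≤ (N : ℤ) * d := by
  classical
  have : Mlow d N σ = ∑ v : Fin N, (if lvl (σ.bk v) < d then (1 : ℤ) else 0) := by
    rw [Mlow, Finset.card_filter]
    push_cast
    rfl
  rw [this, Tsum, ← Finset.sum_add_distrib]
  have hle : ∀ v : Fin N,
      (lvl (σ.bk v) : ℤ) + (if lvl (σ.bk v) < d then (1 : ℤ) else 0) ≤ (d : ℤ) := by
    intro v
    have := lvl_le (σ.bk v)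
    split_ifs with h
    · have : (lvl (σ.bk v) : ℤ) < (d : ℤ) := by exact_mod_cast h
      omega
    · have : (lvl (σ.bk v) : ℤ) ≤ (d : ℤ) := by exact_mod_cast lvl_le (σ.bk v)
      omega
  calc ∑ v : Fin N, ((lvl (σ.bk v) : ℤ) + if lvl (σ.bk v) < d then (1 : ℤ) else 0)
      ≤ ∑ _v : Fin N, (d : ℤ) := Finset.sum_le_sum fun v _ => hle v
    _ = (N : ℤ) * d := by
        rw [Finset.sum_const, Finset.card_univ, Fintype.card_fin, nsmul_eq_mul]

lemma wsum_nonneg (σ : St d N) : 0 ≤ Wsum d N σ := by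
  apply Finset.sum_nonneg
  intro p _
  split_ifs
  · positivity
  · exact le_rfl

lemma Φ_nonneg (σ : St d N) : 0 ≤ Φ d N σ := by
  have h1 := tm_le d N σ
  have h2 := wsum_nonneg d N σ
  simp only [Φ]
  linarith

lemma Φ_const_none (l : Fin N → ℕ) : Φ d N ⟨fun _ => none, l⟩ = 0 := by
  simp only [Φ, Tsum, Mlow, Wsum, lvl_none]
  rw [Finset.sum_const, Finset.card_univ, Fintype.card_fin, nsmul_eq_mul]
  have h2 : (∑ p : Fin d × Fin (sN d N - 1),
      if ∃ _v : Fin N, (none : Option (Fin d × Fin (sN d N - 1))) = some p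
      then ((sN d N : ℤ)) ^ ((p.1 : ℕ)) else 0) = 0 :=
    Finset.sum_eq_zero (fun p _ => if_neg (by rintro ⟨v, hv⟩; cases hv))
  have h3 : (Finset.univ.filter fun _v : Fin N => d < d) = ∅ :=
    Finset.filter_false_of_mem (fun _ _ => lt_irrefl d)
  rw [h2]
  norm_num

/-- Closed form for sums of powers over low-bucket indices. -/
lemma sum_pow_low (i : ℕ) (hi : i ≤ d) :
    (∑ p : Fin d × Fin (sN d N - 1),
      if (p.1 : ℕ) < i then ((sN d N : ℤ)) ^ ((p.1 : ℕ)) else 0)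
    = ((sN d N - 1 : ℕ) : ℤ) * ∑ j ∈ Finset.range i, (sN d N : ℤ) ^ j := by
  classical
  rw [Fintype.sum_prod_type]
  have h1 : ∀ j : Fin d,
      (∑ _c : Fin (sN d N - 1), if (j : ℕ) < i then ((sN d N : ℤ)) ^ ((j : ℕ)) else 0)
      = ((sN d N - 1 : ℕ) : ℤ) * (if (j : ℕ) < i then ((sN d N : ℤ)) ^ ((j : ℕ)) else 0) := by
    intro j
    rw [Finset.sum_const, Finset.card_univ, Fintype.card_fin, nsmul_eq_mul]
  rw [Finset.sum_congr rfl fun j _ => h1 j, ← Finset.mul_sum]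
  congr 1
  have h2 : (∑ j : Fin d, if (j : ℕ) < i then ((sN d N : ℤ)) ^ ((j : ℕ)) else 0)
      = ∑ j ∈ Finset.range d, if j < i then ((sN d N : ℤ)) ^ j else 0 := by
    rw [Fin.sum_univ_eq_sum_range (fun j => if j < i then ((sN d N : ℤ)) ^ j else 0) d]
  rw [h2, ← Finset.sum_filter]
  congr 1
  ext a
  simp only [Finset.mem_filter, Finset.mem_range]
  omega

lemma geom_closed (hs : 1 ≤ sN d N) (i : ℕ) :
    ((sN d N - 1 : ℕ) : ℤ) * ∑ j ∈ Finset.range i, (sN d N : ℤ) ^ j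
      = (sN d N : ℤ) ^ i - 1 := by
  have h1 : ((sN d N - 1 : ℕ) : ℤ) = (sN d N : ℤ) - 1 := by
    have : (1 : ℕ) ≤ sN d N := hs
    push_cast [Nat.cast_sub this]
    ring
  rw [h1, mul_comm, geom_sum_mul]

/-! ### The amortized bound for one step -/

lemma recount_self {N : ℕ} (f : Fin N → ℕ) : recount f f = 0 := by
  simp [recount]

lemma step_amortized (hd : 1 ≤ d) (hN : 1 ≤ N) (σ : St d N) (Gn : SimpleGraph (Fin N)) :
    (recount (colorOf d N σ) (colorOf d N (step d N σ Gn)) : ℤ) + Φ d N (step d N σ Gn)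
      ≤ ((d : ℤ) + 2) + Φ d N σ := by
  classical
  have hs1 := one_le_sN d N hN
  rcases step_cases d N σ Gn with ⟨_, heq⟩ | ⟨u, i, c0, _, hEmpty, hFull, heq⟩ | ⟨_, hFull, heq⟩
  · rw [heq, recount_self]
    simp only [Nat.cast_zero, zero_add, add_comm]
    have : (0:ℤ) ≤ (d:ℤ) + 2 := by positivity
    omega
  · -- low reset
    rw [heq]
    set σ' := resetLow d N σ Gn u i c0 with hσ'
    set S : Finset (Fin N) :=
      Finset.univ.filter (fun v => v = u ∨ lvl (σ.bk v) < (i : ℕ)) with hS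
    have hmemS : ∀ v : Fin N, v ∈ S ↔ (v = u ∨ lvl (σ.bk v) < (i : ℕ)) := by
      intro v; simp [hS]
    have huS : u ∈ S := (hmemS u).mpr (Or.inl rfl)
    have hcardpos : 1 ≤ S.card := Finset.card_pos.mpr ⟨u, huS⟩
    -- recount bound
    have hrec : (recount (colorOf d N σ) (colorOf d N σ') : ℤ) ≤ (S.card : ℤ) := by
      have : recount (colorOf d N σ) (colorOf d N σ') ≤ S.card := by
        apply Finset.card_le_card
        intro v hv
        rw [Finset.mem_filter] at hv
        rw [hmemS]
        by_contra hcon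
        apply hv.2
        simp only [colorOf, hσ', resetLow, if_neg hcon]
      exact_mod_cast this
    -- T difference
    have hT : Tsum d N σ' = Tsum d N σ + ∑ v ∈ S, ((i : ℤ) - (lvl (σ.bk v) : ℤ)) := by
      have : ∀ v : Fin N, (lvl (σ'.bk v) : ℤ)
          = (lvl (σ.bk v) : ℤ) + (if v = u ∨ lvl (σ.bk v) < (i : ℕ)
              then ((i : ℤ) - (lvl (σ.bk v) : ℤ)) else 0) := by
        intro v
        simp only [hσ', resetLow]
        split_ifs with h
        · rw [lvl_some]; ring
        · ring
      simp only [Tsum]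
      rw [Finset.sum_congr rfl fun v _ => this v, Finset.sum_add_distrib]
      congr 1
      rw [hS, Finset.sum_filter]
    have hTbound : ∑ v ∈ S, ((lvl (σ.bk v) : ℤ) - (i : ℤ)) ≤ (d : ℤ) - ((S.card : ℤ) - 1) := by
      rw [← Finset.add_sum_erase S _ huS]
      have h1 : (lvl (σ.bk u) : ℤ) - (i : ℤ) ≤ (d : ℤ) := by
        have := lvl_le (σ.bk u)
        have h2 : (0 : ℤ) ≤ (i : ℤ) := by positivity
        have : (lvl (σ.bk u) : ℤ) ≤ (d : ℤ) := by exact_mod_cast this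
        omega
      have h2 : ∑ v ∈ S.erase u, ((lvl (σ.bk v) : ℤ) - (i : ℤ))
          ≤ ∑ _v ∈ S.erase u, (-1 : ℤ) := by
        apply Finset.sum_le_sum
        intro v hv
        obtain ⟨hvu, hvS⟩ := Finset.mem_erase.mp hv
        have := (hmemS v).mp hvS
        have hlt : lvl (σ.bk v) < (i : ℕ) := by tauto
        have : (lvl (σ.bk v) : ℤ) < (i : ℤ) := by exact_mod_cast hlt
        omega
      have h3 : ∑ _v ∈ S.erase u, (-1 : ℤ) = -(((S.card : ℤ)) - 1) := by
        rw [Finset.sum_const, Finset.card_erase_of_mem huS]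
        have : ((S.card - 1 : ℕ) : ℤ) = (S.card : ℤ) - 1 := by
          omega
        simp [this]
      rw [h3] at h2
      omega
    -- Mlow monotone
    have hM : Mlow d N σ ≤ Mlow d N σ' := by
      simp only [Mlow]
      have : (Finset.univ.filter fun v : Fin N => lvl (σ.bk v) < d)
          ⊆ (Finset.univ.filter fun v : Fin N => lvl (σ'.bk v) < d) := by
        intro v hv
        rw [Finset.mem_filter] at hv ⊢
        refine ⟨Finset.mem_univ _, ?_⟩
        simp only [hσ', resetLow]
        split_ifs with h
        · rw [lvl_some]; exact i.isLt
        · exact hv.2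
      exact_mod_cast Finset.card_le_card this
    -- W difference
    have hW : Wsum d N σ' - Wsum d N σ ≤ 1 := by
      have key : ∀ p : Fin d × Fin (sN d N - 1),
          (if ∃ v, σ'.bk v = some p then ((sN d N : ℤ)) ^ ((p.1 : ℕ)) else 0)
          - (if ∃ v, σ.bk v = some p then ((sN d N : ℤ)) ^ ((p.1 : ℕ)) else 0)
          ≤ (if p = (i, c0) then ((sN d N : ℤ)) ^ ((i : ℕ)) else 0)
            + (if (p.1 : ℕ) < (i : ℕ) then -((sN d N : ℤ)) ^ ((p.1 : ℕ)) else 0) := by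
        intro p
        have hpow : (0 : ℤ) ≤ ((sN d N : ℤ)) ^ ((p.1 : ℕ)) := by positivity
        by_cases hp : p = (i, c0)
        · subst hp
          have hlt : ¬ ((i : ℕ) < (i : ℕ)) := lt_irrefl _
          have hold : ¬ ∃ v, σ.bk v = some (i, c0) := by
            rintro ⟨v, hv⟩; exact hEmpty v hv
          rw [if_pos rfl, if_neg hlt, if_neg hold]
          split_ifs
          · simp
          · simp only [add_zero, sub_zero]
            positivity
        · have himp : (∃ v, σ'.bk v = some p) → (∃ v, σ.bk v = some p) := by
            rintro ⟨v, hv⟩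
            simp only [hσ', resetLow] at hv
            split_ifs at hv with h
            · exact absurd (Option.some_injective _ hv).symm hp
            · exact ⟨v, hv⟩
          by_cases hlow : (p.1 : ℕ) < (i : ℕ)
          · -- old nonempty, new empty
            have hold : ∃ v, σ.bk v = some p := by
              obtain ⟨x, hx⟩ := hFull p.1 hlow p.2
              exact ⟨x, by rw [hx]⟩
            have hnew : ¬ ∃ v, σ'.bk v = some p := by
              rintro ⟨v, hv⟩
              simp only [hσ', resetLow] at hv
              split_ifs at hv with h
              · exact absurd (Option.some_injective _ hv).symm hp
              · have : lvl (σ.bk v) < (i : ℕ) := by rw [hv, lvl_some]; exact hlow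
                exact h (Or.inr this)
            rw [if_neg hp, if_pos hlow, if_neg hnew, if_pos hold]
            simp
          · rw [if_neg hp, if_neg hlow]
            split_ifs with h1 h2
            · simp
            · exact absurd (himp h1) h2
            · simp only [zero_sub, add_zero]
              omega
            · simp
      have hsum : Wsum d N σ' - Wsum d N σ
          ≤ (∑ p : Fin d × Fin (sN d N - 1),
              if p = (i, c0) then ((sN d N : ℤ)) ^ ((i : ℕ)) else 0)
            + ∑ p : Fin d × Fin (sN d N - 1),
              if (p.1 : ℕ) < (i : ℕ) then -((sN d N : ℤ)) ^ ((p.1 : ℕ)) else 0 := by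
        rw [Wsum, Wsum, ← Finset.sum_sub_distrib, ← Finset.sum_add_distrib]
        exact Finset.sum_le_sum fun p _ => key p
      have h1 : (∑ p : Fin d × Fin (sN d N - 1),
          if p = (i, c0) then ((sN d N : ℤ)) ^ ((i : ℕ)) else 0)
          = ((sN d N : ℤ)) ^ ((i : ℕ)) := by
        rw [Finset.sum_ite_eq' Finset.univ (i, c0) (fun _ => ((sN d N : ℤ)) ^ ((i : ℕ)))]
        simp
      have h2 : (∑ p : Fin d × Fin (sN d N - 1),
          if (p.1 : ℕ) < (i : ℕ) then -((sN d N : ℤ)) ^ ((p.1 : ℕ)) else 0)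
          = -(((sN d N : ℤ)) ^ ((i : ℕ)) - 1) := by
        have : (∑ p : Fin d × Fin (sN d N - 1),
            if (p.1 : ℕ) < (i : ℕ) then -((sN d N : ℤ)) ^ ((p.1 : ℕ)) else 0)
            = -∑ p : Fin d × Fin (sN d N - 1),
              if (p.1 : ℕ) < (i : ℕ) then ((sN d N : ℤ)) ^ ((p.1 : ℕ)) else 0 := by
          rw [← Finset.sum_neg_distrib]
          congr 1
          ext p
          split_ifs <;> simp
        rw [this, sum_pow_low d N (i : ℕ) i.isLt.le, geom_closed d N hs1]
      rw [h1, h2] at hsum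
      omega
    -- combine
    simp only [Φ]
    have : Tsum d N σ - Tsum d N σ' = -∑ v ∈ S, ((i : ℤ) - (lvl (σ.bk v) : ℤ)) := by
      rw [hT]; ring
    have hTT : Tsum d N σ - Tsum d N σ' ≤ (d : ℤ) - ((S.card : ℤ) - 1) := by
      rw [this]
      have : -∑ v ∈ S, ((i : ℤ) - (lvl (σ.bk v) : ℤ))
          = ∑ v ∈ S, ((lvl (σ.bk v) : ℤ) - (i : ℤ)) := by
        rw [← Finset.sum_neg_distrib]
        congr 1; ext v; ring
      rw [this]
      exact hTbound
    linarith
  · -- top reset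
    rw [heq]
    have hΦ' : Φ d N (resetTop d N Gn) = 0 := Φ_const_none d N _
    have hrec : (recount (colorOf d N σ) (colorOf d N (resetTop d N Gn)) : ℤ) ≤ (N : ℤ) := by
      have : recount (colorOf d N σ) (colorOf d N (resetTop d N Gn)) ≤ N := by
        calc recount (colorOf d N σ) (colorOf d N (resetTop d N Gn))
            ≤ (Finset.univ : Finset (Fin N)).card := Finset.card_le_card (Finset.filter_subset _ _)
          _ = N := by simp
      exact_mod_cast this
    -- W σ = s^d - 1
    have hWfull : Wsum d N σ = (sN d N : ℤ) ^ d - 1 := by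
      have : Wsum d N σ = ∑ p : Fin d × Fin (sN d N - 1),
          if (p.1 : ℕ) < d then ((sN d N : ℤ)) ^ ((p.1 : ℕ)) else 0 := by
        apply Finset.sum_congr rfl
        intro p _
        rw [if_pos (by
          obtain ⟨x, hx⟩ := hFull p.1 p.2
          exact ⟨x, by rw [hx]⟩), if_pos p.1.isLt]
      rw [this, sum_pow_low d N d le_rfl, geom_closed d N hs1]
    have hΦσ : (N : ℤ) - 1 ≤ Φ d N σ := by
      have h1 := tm_le d N σ
      have h2 : (N : ℤ) ≤ (sN d N : ℤ) ^ d := by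
        exact_mod_cast N_le_sN_pow d N hd hN
      simp only [Φ]
      rw [hWfull]
      linarith
    rw [hΦ']
    have : (1 : ℤ) ≤ (d : ℤ) := by exact_mod_cast hd
    linarith

/-! ### Evolution along a list of graphs -/

noncomputable def stList : List (SimpleGraph (Fin N)) → St d N
  | [] => init d N
  | g :: l => step d N (stList l) g

end SBaux

/-- The small-buckets algorithm: an `O(d·N^{1/d})`-competitive recoloring algorithm with
`O(d)` amortized recolorings per update. -/
theorem smallBuckets_amortized (d N : ℕ) (hd : 1 ≤ d) (hN : 1 ≤ N) :
    ∃ A : List (SimpleGraph (Fin N)) → (Fin N → ℕ),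
      ∀ (m : ℕ) (G : ℕ → SimpleGraph (Fin N)),
        G 0 = ⊥ → (∀ t < m, isStep (G t) (G (t + 1))) →
        (∀ t ≤ m, IsProperNat (G t) (A ((List.range (t + 1)).map G))) ∧
        (∀ t ≤ m, ∀ v : Fin N,
          1 ≤ A ((List.range (t + 1)).map G) v ∧
          A ((List.range (t + 1)).map G) v ≤
            (1 + d * (⌈(N : ℝ) ^ ((1 : ℝ) / d)⌉₊ - 1)) *
              ((Finset.range (m + 1)).sup fun t => ((G t).chromaticNumber).toNat)) ∧
        (∑ t ∈ Finset.range m,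
            recount (A ((List.range (t + 1)).map G)) (A ((List.range (t + 2)).map G)))
          ≤ (d + 2) * m := by
  classical
  open SBaux in
  refine ⟨fun l => colorOf d N (stList d N l.reverse), ?_⟩
  intro m G hG0 hstep
  set σt : ℕ → St d N := fun t => stList d N (((List.range (t + 1)).map G).reverse) with hσt
  have hAux : ∀ t, (fun l => colorOf d N (stList d N l.reverse)) ((List.range (t + 1)).map G)
      = colorOf d N (σt t) := fun t => rfl
  have hsucc : ∀ t, σt (t + 1) = step d N (σt t) (G (t + 1)) := by
    intro t
    simp only [hσt]
    rw [List.range_succ, List.map_append, List.reverse_append]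
    simp [stList]
  have h0 : σt 0 = init d N := by
    have h1 : σt 0 = step d N (init d N) (G 0) := by
      simp only [hσt]
      norm_num [List.range_succ, stList]
    rw [h1, hG0]
    apply step_no_conflict
    rintro ⟨v, w, hvw, -⟩
    exact hvw
  -- properness
  have hproper : ∀ t ≤ m, IsProperNat (G t) (colorOf d N (σt t)) := by
    intro t
    induction t with
    | zero =>
      intro _
      rw [h0, hG0]
      intro x y hxy
      exact absurd hxy (by simp)
    | succ n ih =>
      intro hnm
      rw [hsucc n]
      exact step_proper d N (hstep n (by omega)) (ih (by omega))
  -- loc bounds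
  have hloc : ∀ t ≤ m, ∀ v : Fin N, ∃ k ≤ t, (σt t).loc v < ((G k).chromaticNumber).toNat := by
    intro t
    induction t with
    | zero =>
      intro _ v
      refine ⟨0, le_rfl, ?_⟩
      rw [h0]
      have := optC_lt (G 0) v
      simp only [init]
      omega
    | succ n ih =>
      intro hnm v
      rw [hsucc n]
      rcases step_loc d N (σt n) (G (n + 1)) v with h | h
      · obtain ⟨k, hk, hklt⟩ := ih (by omega) v
        exact ⟨k, by omega, by rw [h]; exact hklt⟩
      · exact ⟨n + 1, le_rfl, by rw [h]; exact optC_lt _ v⟩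
  refine ⟨fun t ht => by rw [hAux]; exact hproper t ht, ?_, ?_⟩
  · -- color bounds
    intro t ht v
    rw [hAux]
    constructor
    · simp only [colorOf]
      omega
    · set C := (Finset.range (m + 1)).sup fun t => ((G t).chromaticNumber).toNat with hC
      obtain ⟨k, hk, hklt⟩ := hloc t ht v
      have hkC : ((G k).chromaticNumber).toNat ≤ C := by
        rw [hC]
        exact Finset.le_sup (f := fun t => ((G t).chromaticNumber).toNat)
          (Finset.mem_range.mpr (by omega))
      have hlC : (σt t).loc v < C := lt_of_lt_of_le hklt hkC
      have hB : encB ((σt t).bk v) < Bk d N := encB_lt _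
      have : colorOf d N (σt t) v ≤ Bk d N * ((σt t).loc v + 1) := by
        simp only [colorOf]
        have : (σt t).loc v + 1 ≤ (σt t).loc v + 1 := le_rfl
        nlinarith [Nat.zero_le ((σt t).loc v)]
      calc colorOf d N (σt t) v ≤ Bk d N * ((σt t).loc v + 1) := this
        _ ≤ Bk d N * C := Nat.mul_le_mul_left _ (by omega)
        _ = (1 + d * (⌈(N : ℝ) ^ ((1 : ℝ) / d)⌉₊ - 1)) * C := by rfl
  · -- amortized recoloring bound
    have key : ∀ t, (recount (colorOf d N (σt t)) (colorOf d N (σt (t + 1))) : ℤ)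
        ≤ ((d : ℤ) + 2) + Φ d N (σt t) - Φ d N (σt (t + 1)) := by
      intro t
      have := step_amortized d N hd hN (σt t) (G (t + 1))
      rw [← hsucc] at this
      omega
    have hsum : (∑ t ∈ Finset.range m,
        (recount (colorOf d N (σt t)) (colorOf d N (σt (t + 1))) : ℤ))
        ≤ ((d : ℤ) + 2) * m + (Φ d N (σt 0) - Φ d N (σt m)) := by
      calc (∑ t ∈ Finset.range m,
          (recount (colorOf d N (σt t)) (colorOf d N (σt (t + 1))) : ℤ))
          ≤ ∑ t ∈ Finset.range m,
            (((d : ℤ) + 2) + (Φ d N (σt t) - Φ d N (σt (t + 1)))) := by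
            apply Finset.sum_le_sum
            intro t _
            have := key t
            omega
        _ = ((d : ℤ) + 2) * m + ∑ t ∈ Finset.range m, (Φ d N (σt t) - Φ d N (σt (t + 1))) := by
            rw [Finset.sum_add_distrib, Finset.sum_const, Finset.card_range, nsmul_eq_mul]
            ring
        _ = ((d : ℤ) + 2) * m + (Φ d N (σt 0) - Φ d N (σt m)) := by
            rw [Finset.sum_range_sub' (fun t => Φ d N (σt t)) m]
    have hΦ0 : Φ d N (σt 0) = 0 := by rw [h0]; exact Φ_const_none d N _
    have hΦm : 0 ≤ Φ d N (σt m) := Φ_nonneg d N _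
    have hfinal : (∑ t ∈ Finset.range m,
        (recount (colorOf d N (σt t)) (colorOf d N (σt (t + 1))) : ℤ))
        ≤ ((d : ℤ) + 2) * m := by
      rw [hΦ0] at hsum
      omega
    have hcast : ((∑ t ∈ Finset.range m,
        recount (colorOf d N (σt t)) (colorOf d N (σt (t + 1)))) : ℤ)
        = ∑ t ∈ Finset.range m,
          (recount (colorOf d N (σt t)) (colorOf d N (σt (t + 1))) : ℤ) := by
      push_cast
      rfl
    have : (∑ t ∈ Finset.range m,
        recount (colorOf d N (σt t)) (colorOf d N (σt (t + 1)))) ≤ (d + 2) * m := by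
      have h2 : (((d + 2) * m : ℕ) : ℤ) = ((d : ℤ) + 2) * m := by push_cast; ring
      rw [← h2] at hfinal
      rw [hcast] at *
      exact_mod_cast hfinal
    calc ∑ t ∈ Finset.range m,
        recount ((fun l => colorOf d N (stList d N l.reverse)) ((List.range (t + 1)).map G))
          ((fun l => colorOf d N (stList d N l.reverse)) ((List.range (t + 2)).map G))
        = ∑ t ∈ Finset.range m,
          recount (colorOf d N (σt t)) (colorOf d N (σt (t + 1))) := rfl
      _ ≤ (d + 2) * m := this
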